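/- For every natural number j ≥ 1, the series ∑_{r=1}^∞ arctan( F_{2j}·√(5·L_{4j})·L_{4jr} / L_{8jr} ) converges and its sum equals arctan( (1/√5)·√(L_{4j}) / F_{2j} ). -/

import Mathlib

def lucas : ℕ → ℕ
  | 0 => 2
  | 1 => 1
  | n + 2 => lucas (n + 1) + lucas n

theorem lucas_binet : ∀ n : ℕ, ((lucas n : ℕ) : ℝ) = Real.goldenRatio ^ n + Real.goldenConj ^ n
  | 0 => by norm_num [lucas]
  | 1 => by
      have h := Real.goldenRatio_add_goldenConj
      have h1 : lucas 1 = 1 := rfl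
      rw [h1]
      push_cast
      rw [pow_one, pow_one]
      linarith
  | n + 2 => by
      have h0 := lucas_binet n
      have h1 := lucas_binet (n + 1)
      have hl : lucas (n + 2) = lucas (n + 1) + lucas n := rfl
      have hφ : Real.goldenRatio ^ (n + 2) = Real.goldenRatio ^ (n + 1) + Real.goldenRatio ^ n := by
        have h := Real.goldenRatio_sq
        calc Real.goldenRatio ^ (n + 2) = Real.goldenRatio ^ n * Real.goldenRatio ^ 2 := by ring
          _ = Real.goldenRatio ^ n * (Real.goldenRatio + 1) := by rw [h]
          _ = _ := by ring
      have hψ : Real.goldenConj ^ (n + 2) = Real.goldenConj ^ (n + 1) + Real.goldenConj ^ n := by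
        have h := Real.goldenConj_sq
        calc Real.goldenConj ^ (n + 2) = Real.goldenConj ^ n * Real.goldenConj ^ 2 := by ring
          _ = Real.goldenConj ^ n * (Real.goldenConj + 1) := by rw [h]
          _ = _ := by ring
      rw [hl]
      push_cast
      rw [h0, h1, hφ, hψ]
      ring

theorem lucas_pos : ∀ n : ℕ, 0 < lucas n
  | 0 => by norm_num [lucas]
  | 1 => by norm_num [lucas]
  | n + 2 => by
      have h0 := lucas_pos n
      have h1 := lucas_pos (n + 1)
      have hl : lucas (n + 2) = lucas (n + 1) + lucas n := rfl
      omega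

theorem alg_key (x c : ℝ) (r : ℕ) (hx : 0 < x)
    (hD1 : 0 < x ^ (2 * r + 1) - x⁻¹ ^ (2 * r + 1))
    (hD2 : 0 < x ^ (2 * (r + 1) + 1) - x⁻¹ ^ (2 * (r + 1) + 1))
    (hc2 : c ^ 2 = x ^ 2 + x⁻¹ ^ 2) :
    (c / (x ^ (2 * r + 1) - x⁻¹ ^ (2 * r + 1)) -
        c / (x ^ (2 * (r + 1) + 1) - x⁻¹ ^ (2 * (r + 1) + 1))) /
      (1 + c / (x ^ (2 * r + 1) - x⁻¹ ^ (2 * r + 1)) *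
        (c / (x ^ (2 * (r + 1) + 1) - x⁻¹ ^ (2 * (r + 1) + 1)))) =
    (x - x⁻¹) * c * (x ^ (2 * r + 2) + x⁻¹ ^ (2 * r + 2)) /
      (x ^ (4 * r + 4) + x⁻¹ ^ (4 * r + 4)) := by
  set y := x⁻¹ with hy
  have hxy : x * y = 1 := mul_inv_cancel₀ hx.ne'
  have hy0 : 0 < y := inv_pos.2 hx
  have hp : (x * y) ^ (2 * r + 1) = 1 := by rw [hxy, one_pow]
  set D1 := x ^ (2 * r + 1) - y ^ (2 * r + 1) with hD1def
  set D2 := x ^ (2 * (r + 1) + 1) - y ^ (2 * (r + 1) + 1) with hD2def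
  have hD1' : D1 ≠ 0 := ne_of_gt hD1
  have hD2' : D2 ≠ 0 := ne_of_gt hD2
  have hS : (0:ℝ) < x ^ (4 * r + 4) + y ^ (4 * r + 4) :=
    add_pos (pow_pos hx _) (pow_pos hy0 _)
  have hS' : x ^ (4 * r + 4) + y ^ (4 * r + 4) ≠ 0 := ne_of_gt hS
  have e1 : D2 - D1 = (x - y) * (x ^ (2 * r + 2) + y ^ (2 * r + 2)) := by
    rw [hD1def, hD2def]
    linear_combination (x ^ (2 * r + 1) - y ^ (2 * r + 1)) * hxy
  have e2 : D1 * D2 + c ^ 2 = x ^ (4 * r + 4) + y ^ (4 * r + 4) := by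
    rw [hD1def, hD2def]
    linear_combination hc2 - (x ^ 2 + y ^ 2) * hp
  have h1 : c / D1 - c / D2 = c * (x - y) * (x ^ (2 * r + 2) + y ^ (2 * r + 2)) / (D1 * D2) := by
    rw [div_sub_div _ _ hD1' hD2']
    congr 1
    linear_combination c * e1
  have h2 : 1 + c / D1 * (c / D2) = (x ^ (4 * r + 4) + y ^ (4 * r + 4)) / (D1 * D2) := by
    field_simp
    linear_combination e2
  rw [h1, h2, div_div_div_cancel_right₀]
  · ring
  · exact mul_ne_zero hD1' hD2'

theorem stmt10 (j : ℕ) (hj : 1 ≤ j) :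
    HasSum (fun r : ℕ =>
        Real.arctan ((Nat.fib (2 * j) : ℝ) * Real.sqrt (5 * (lucas (4 * j) : ℝ)) *
            (lucas (4 * j * (1 + r)) : ℝ) / (lucas (8 * j * (1 + r)) : ℝ)))
      (Real.arctan ((1 / Real.sqrt 5) * Real.sqrt (lucas (4 * j) : ℝ) /
        (Nat.fib (2 * j) : ℝ))) := by
  have h2j : 2 * j ≠ 0 := by omega
  set X : ℝ := Real.goldenRatio ^ (2 * j) with hXdef
  have hX1 : 1 < X := one_lt_pow₀ Real.one_lt_goldenRatio h2j
  have hX0 : 0 < X := lt_trans one_pos hX1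
  have hXi0 : 0 < X⁻¹ := inv_pos.2 hX0
  have hXi1 : X⁻¹ < 1 := inv_lt_one_of_one_lt₀ hX1
  have hpsi : Real.goldenConj ^ (2 * j) = X⁻¹ := by
    have h : X * Real.goldenConj ^ (2 * j) = 1 := by
      rw [hXdef, ← mul_pow, Real.goldenRatio_mul_goldenConj, pow_mul]
      norm_num
    have h' : Real.goldenConj ^ (2 * j) * X = 1 := by rw [mul_comm]; exact h
    exact eq_inv_of_mul_eq_one_left h'
  have hlucas : ∀ k : ℕ, ((lucas (2 * j * k) : ℕ) : ℝ) = X ^ k + X⁻¹ ^ k := by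
    intro k
    rw [lucas_binet, pow_mul Real.goldenRatio (2 * j) k, pow_mul Real.goldenConj (2 * j) k, hpsi, ← hXdef]
  have hfib : ∀ k : ℕ, ((Nat.fib (2 * j * k) : ℕ) : ℝ) = (X ^ k - X⁻¹ ^ k) / Real.sqrt 5 := by
    intro k
    rw [Real.coe_fib_eq, pow_mul Real.goldenRatio (2 * j) k, pow_mul Real.goldenConj (2 * j) k, hpsi, ← hXdef]
  have hl4 : ((lucas (4 * j) : ℕ) : ℝ) = X ^ 2 + X⁻¹ ^ 2 := by
    have h := hlucas 2
    rwa [show 2 * j * 2 = 4 * j by ring] at h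
  have hfib2j : ((Nat.fib (2 * j) : ℕ) : ℝ) = (X - X⁻¹) / Real.sqrt 5 := by
    have h := hfib 1
    rwa [show 2 * j * 1 = 2 * j by ring, pow_one, pow_one] at h
  set c : ℝ := Real.sqrt ((lucas (4 * j) : ℕ) : ℝ) with hcdef
  have hc0 : 0 < c := by
    rw [hcdef]
    apply Real.sqrt_pos.2
    exact_mod_cast lucas_pos (4 * j)
  have hc2 : c ^ 2 = X ^ 2 + X⁻¹ ^ 2 := by
    rw [hcdef, Real.sq_sqrt (by positivity), hl4]
  have hD0 : ∀ n : ℕ, 0 < X ^ (2 * n + 1) - X⁻¹ ^ (2 * n + 1) := by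
    intro n
    have h1 : (1:ℝ) ≤ X ^ (2 * n + 1) := one_le_pow₀ hX1.le
    have h2 : X⁻¹ ^ (2 * n + 1) < 1 := pow_lt_one₀ hXi0.le hXi1 (by omega)
    linarith
  set t : ℕ → ℝ := fun n => c / (X ^ (2 * n + 1) - X⁻¹ ^ (2 * n + 1)) with htdef
  have ht0 : ∀ n, 0 < t n := fun n => div_pos hc0 (hD0 n)
  have hterm : ∀ r : ℕ,
      Real.arctan ((Nat.fib (2 * j) : ℝ) * Real.sqrt (5 * (lucas (4 * j) : ℝ)) *
          (lucas (4 * j * (1 + r)) : ℝ) / (lucas (8 * j * (1 + r)) : ℝ)) =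
        Real.arctan (t r) - Real.arctan (t (r + 1)) := by
    intro r
    have hs5 : Real.sqrt (5 * ((lucas (4 * j) : ℕ) : ℝ)) = Real.sqrt 5 * c := by
      rw [hcdef, Real.sqrt_mul (by norm_num : (0:ℝ) ≤ 5)]
    have hL1 : ((lucas (4 * j * (1 + r)) : ℕ) : ℝ) = X ^ (2 * r + 2) + X⁻¹ ^ (2 * r + 2) := by
      have h := hlucas (2 * r + 2)
      rwa [show 2 * j * (2 * r + 2) = 4 * j * (1 + r) by ring] at h
    have hL2 : ((lucas (8 * j * (1 + r)) : ℕ) : ℝ) = X ^ (4 * r + 4) + X⁻¹ ^ (4 * r + 4) := by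
      have h := hlucas (4 * r + 4)
      rwa [show 2 * j * (4 * r + 4) = 8 * j * (1 + r) by ring] at h
    have hcond : t r * -(t (r + 1)) < 1 := by
      have h := mul_pos (ht0 r) (ht0 (r + 1))
      nlinarith
    have harc := Real.arctan_add hcond
    rw [Real.arctan_neg, ← sub_eq_add_neg,
      show (t r + -t (r + 1)) / (1 - t r * -t (r + 1)) =
        (t r - t (r + 1)) / (1 + t r * t (r + 1)) by ring] at harc
    rw [harc]
    congr 1
    simp only [htdef]
    have halg := alg_key X c r hX0 (hD0 r) (hD0 (r + 1)) hc2
    rw [halg, hfib2j, hs5, hL1, hL2]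
    have h5 : Real.sqrt 5 ≠ 0 := by positivity
    field_simp
  have hfnn : ∀ r : ℕ, 0 ≤ Real.arctan ((Nat.fib (2 * j) : ℝ) *
      Real.sqrt (5 * (lucas (4 * j) : ℝ)) *
      (lucas (4 * j * (1 + r)) : ℝ) / (lucas (8 * j * (1 + r)) : ℝ)) := by
    intro r
    rw [← Real.arctan_zero]
    exact Real.arctan_strictMono.monotone (by positivity)
  rw [hasSum_iff_tendsto_nat_of_nonneg hfnn]
  have hsum : ∀ n : ℕ, ∑ i ∈ Finset.range n,
      Real.arctan ((Nat.fib (2 * j) : ℝ) * Real.sqrt (5 * (lucas (4 * j) : ℝ)) *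
        (lucas (4 * j * (1 + i)) : ℝ) / (lucas (8 * j * (1 + i)) : ℝ)) =
      Real.arctan (t 0) - Real.arctan (t n) := by
    intro n
    rw [Finset.sum_congr rfl fun i _ => hterm i]
    exact Finset.sum_range_sub' (fun i => Real.arctan (t i)) n
  have htarget : (1 / Real.sqrt 5) * Real.sqrt ((lucas (4 * j) : ℕ) : ℝ) /
      ((Nat.fib (2 * j) : ℕ) : ℝ) = t 0 := by
    rw [htdef]
    simp only [mul_zero, zero_add, pow_one]
    rw [hfib2j, ← hcdef]
    have h5 : Real.sqrt 5 ≠ 0 := by positivity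
    have hXX : X - X⁻¹ ≠ 0 := by
      have : X⁻¹ < X := lt_trans hXi1 hX1
      linarith
    have hd : (X - X⁻¹) / Real.sqrt 5 ≠ 0 := div_ne_zero hXX h5
    rw [div_eq_div_iff hd hXX]
    ring
  have hDtop : Filter.Tendsto (fun n : ℕ => X ^ (2 * n + 1) - X⁻¹ ^ (2 * n + 1))
      Filter.atTop Filter.atTop := by
    have hmono : StrictMono (fun n : ℕ => 2 * n + 1) := by
      intro a b h
      simp only
      omega
    have hXtop : Filter.Tendsto (fun n : ℕ => X ^ (2 * n + 1)) Filter.atTop Filter.atTop :=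
      (tendsto_pow_atTop_atTop_of_one_lt hX1).comp hmono.tendsto_atTop
    have hXtop' := Filter.tendsto_atTop_add_const_right Filter.atTop (-1 : ℝ) hXtop
    apply Filter.tendsto_atTop_mono _ hXtop'
    intro n
    have h2 : X⁻¹ ^ (2 * n + 1) ≤ 1 := pow_le_one₀ hXi0.le hXi1.le
    show X ^ (2 * n + 1) + (-1) ≤ X ^ (2 * n + 1) - X⁻¹ ^ (2 * n + 1)
    linarith
  have httend : Filter.Tendsto t Filter.atTop (nhds 0) := by
    rw [htdef]
    exact Filter.Tendsto.div_atTop tendsto_const_nhds hDtop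
  have hgtend : Filter.Tendsto (fun n => Real.arctan (t n)) Filter.atTop (nhds 0) := by
    have := (Real.continuous_arctan.tendsto 0).comp httend
    rwa [Real.arctan_zero] at this
  have heq : (fun n : ℕ => ∑ i ∈ Finset.range n,
      Real.arctan ((Nat.fib (2 * j) : ℝ) * Real.sqrt (5 * (lucas (4 * j) : ℝ)) *
        (lucas (4 * j * (1 + i)) : ℝ) / (lucas (8 * j * (1 + i)) : ℝ))) =
      fun n => Real.arctan (t 0) - Real.arctan (t n) := funext hsum
  have final : Filter.Tendsto (fun n => Real.arctan (t 0) - Real.arctan (t n))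
      Filter.atTop (nhds (Real.arctan (t 0) - 0)) :=
    Filter.Tendsto.sub tendsto_const_nhds hgtend
  rw [sub_zero] at final
  rw [heq, htarget]
  exact final
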